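/- arXiv:2103.15291 — 6 statements merged into one kernel-verified Lean document; each statement's English description precedes it below -/
import Mathlib

section
/- For integers n, r, k with n ≥ r ≥ 1, the r-Stirling transform of the poly-Cauchy numbers of the first kind satisfies: ∑_{j=r}^{n} S_r(n,j) · c_j^{(k)} = ∑_{ℓ=1}^{r} (-1)^{r-ℓ} / (n-r+ℓ+1)^k · s(r,ℓ), where S_r(n,j) denotes the r-Stirling number of the second kind and s(r,ℓ) the unsigned Stirling number of the first kind. -/
open Finset

/-- Unsigned Stirling numbers of the first kind. -/
def stirling1 : ℕ → ℕ → ℕ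
  | 0, 0 => 1
  | 0, _ + 1 => 0
  | _ + 1, 0 => 0
  | n + 1, k + 1 => n * stirling1 n (k + 1) + stirling1 n k

/-- Stirling numbers of the second kind. -/
def stirling2 : ℕ → ℕ → ℕ
  | 0, 0 => 1
  | 0, _ + 1 => 0
  | _ + 1, 0 => 0
  | n + 1, k + 1 => (k + 1) * stirling2 n (k + 1) + stirling2 n k

/-- Unsigned r-Stirling numbers of the first kind. -/
def rStirling1 (r : ℕ) : ℕ → ℕ → ℕ
  | 0, m => if r = 0 ∧ m = 0 then 1 else 0
  | n + 1, m =>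
    if n + 1 < r then 0
    else if n + 1 = r then (if m = r then 1 else 0)
    else n * rStirling1 r n m + (match m with | 0 => 0 | m' + 1 => rStirling1 r n m')

/-- r-Stirling numbers of the second kind. -/
def rStirling2 (r : ℕ) : ℕ → ℕ → ℕ
  | 0, m => if r = 0 ∧ m = 0 then 1 else 0
  | n + 1, m =>
    if n + 1 < r then 0
    else if n + 1 = r then (if m = r then 1 else 0)
    else m * rStirling2 r n m + (match m with | 0 => 0 | m' + 1 => rStirling2 r n m')

/-- Poly-Cauchy numbers of the first kind `c_n^{(k)}`. -/
noncomputable def polyCauchy (k : ℤ) (n : ℕ) : ℝ :=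
  ∑ ℓ ∈ range (n + 1), (-1 : ℝ) ^ (n - ℓ) * stirling1 n ℓ / ((ℓ : ℝ) + 1) ^ k

/-- Poly-Cauchy numbers of the second kind `ĉ_n^{(k)}`. -/
noncomputable def polyCauchy2 (k : ℤ) (n : ℕ) : ℝ :=
  (-1 : ℝ) ^ n * ∑ ℓ ∈ range (n + 1), (stirling1 n ℓ : ℝ) / ((ℓ : ℝ) + 1) ^ k

/-- Poly-Cauchy polynomials of the first kind `c_n^{(k)}(z)`. -/
noncomputable def polyCauchyPoly (k : ℤ) (n : ℕ) (z : ℝ) : ℝ :=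
  ∑ m ∈ range (n + 1), (stirling1 n m : ℝ) * (-1 : ℝ) ^ (n - m) *
    ∑ i ∈ range (m + 1), (m.choose i : ℝ) * z ^ (m - i) / ((i : ℝ) + 1) ^ k

/-- Shifted poly-Cauchy numbers of the first kind `c_{n,α}^{(k)}`. -/
noncomputable def shiftedPolyCauchy (k : ℤ) (n : ℕ) (α : ℝ) : ℝ :=
  ∑ m ∈ range (n + 1), (stirling1 n m : ℝ) * (-1 : ℝ) ^ (n - m) / ((m : ℝ) + α) ^ k

/-- Shifted poly-Cauchy numbers of the second kind `ĉ_{n,α}^{(k)}`. -/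
noncomputable def shiftedPolyCauchy2 (k : ℤ) (n : ℕ) (α : ℝ) : ℝ :=
  (-1 : ℝ) ^ n * ∑ m ∈ range (n + 1), (stirling1 n m : ℝ) / ((m : ℝ) + α) ^ k

lemma rStirling2_succ_eq (r n m : ℕ) : rStirling2 r (n+1) m =
    if n + 1 < r then 0
    else if n + 1 = r then (if m = r then 1 else 0)
    else m * rStirling2 r n m + (match m with | 0 => 0 | m' + 1 => rStirling2 r n m') := rfl

lemma stirling1_eq_zero_of_lt : ∀ n m : ℕ, n < m → stirling1 n m = 0 := by
  intro n
  induction n with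
  | zero => intro m h; match m, h with | m+1, _ => rfl
  | succ n ih =>
    intro m h
    match m, h with
    | m+1, h =>
      show n * stirling1 n (m+1) + stirling1 n m = 0
      rw [ih (m+1) (by omega), ih m (by omega)]
      simp

lemma rStirling2_eq_zero_of_lt (r : ℕ) : ∀ n m : ℕ, m < r → rStirling2 r n m = 0 := by
  intro n
  induction n with
  | zero => intro m h; simp only [rStirling2]; rw [if_neg]; omega
  | succ n ih =>
    intro m h
    show rStirling2 r (n+1) m = 0
    rw [rStirling2_succ_eq]
    split
    · rfl
    · split
      · rw [if_neg]; omega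
      · rcases m with _ | m'
        · show 0 * rStirling2 r n 0 + 0 = 0
          simp
        · show (m'+1) * rStirling2 r n (m'+1) + rStirling2 r n m' = 0
          rw [ih (m'+1) h, ih m' (by omega)]
          simp

lemma rStirling2_eq_zero_of_gt (r : ℕ) : ∀ n m : ℕ, n < m → rStirling2 r n m = 0 := by
  intro n
  induction n with
  | zero => intro m h; match m, h with | m+1, _ => simp [rStirling2]
  | succ n ih =>
    intro m h
    rw [rStirling2_succ_eq]
    split
    · rfl
    · split
      · rw [if_neg]; omega
      · rcases m with _ | m'
        · omega
        · show (m'+1) * rStirling2 r n (m'+1) + rStirling2 r n m' = 0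
          rw [ih (m'+1) (by omega), ih m' (by omega)]
          simp

lemma rStirling2_self (r : ℕ) (hr : 1 ≤ r) : rStirling2 r r r = 1 := by
  obtain ⟨n, rfl⟩ : ∃ n, r = n + 1 := ⟨r - 1, by omega⟩
  rw [rStirling2_succ_eq]
  simp

lemma rStirling2_rec (r n m : ℕ) (hn : r ≤ n) :
    rStirling2 r (n+1) (m+1) = (m+1) * rStirling2 r n (m+1) + rStirling2 r n m := by
  rw [rStirling2_succ_eq]
  split
  · omega
  · split
    · rename_i h1 h2
      rw [rStirling2_eq_zero_of_gt r n (m+1) (by omega), rStirling2_eq_zero_of_gt r n m (by omega)]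
      split <;> omega
    · rfl

/-- Shifted functional: `G k a j = ∑_ℓ (-1)^(j-ℓ) s(j,ℓ) / (ℓ+1+a)^k`. -/
noncomputable def G (k : ℤ) (a j : ℕ) : ℝ :=
  ∑ ℓ ∈ range (j + 1), (-1 : ℝ) ^ (j - ℓ) * stirling1 j ℓ / ((ℓ : ℝ) + 1 + a) ^ k

lemma polyCauchy_eq_G (k : ℤ) (j : ℕ) : polyCauchy k j = G k 0 j := by
  unfold polyCauchy G; norm_num

lemma sgs_rec (j ℓ : ℕ) :
    ((-1 : ℝ) ^ (j + 1 - (ℓ + 1)) * stirling1 (j+1) (ℓ+1)) =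
      (-1 : ℝ) ^ (j - ℓ) * stirling1 j ℓ - j * ((-1 : ℝ) ^ (j - (ℓ+1)) * stirling1 j (ℓ+1)) := by
  show ((-1 : ℝ) ^ (j + 1 - (ℓ + 1)) * ↑(j * stirling1 j (ℓ + 1) + stirling1 j ℓ)) = _
  rcases lt_or_ge ℓ j with h | h
  · have h1 : j + 1 - (ℓ + 1) = j - ℓ := by omega
    have h2 : j - ℓ = (j - (ℓ+1)) + 1 := by omega
    rw [h1, h2]
    push_cast
    ring
  · rw [stirling1_eq_zero_of_lt j (ℓ+1) (by omega)]
    have h1 : j + 1 - (ℓ + 1) = j - ℓ := by omega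
    rw [h1]
    push_cast
    ring

lemma G_succ (k : ℤ) (a j : ℕ) :
    G k a (j + 1) = G k (a + 1) j - j * G k a j := by
  have hL : G k a (j + 1) =
      ∑ ℓ ∈ range (j+1), ((-1:ℝ)^(j-ℓ) * stirling1 j ℓ / ((ℓ:ℝ)+2+a)^k
        - j * ((-1:ℝ)^(j-(ℓ+1)) * stirling1 j (ℓ+1) / ((ℓ:ℝ)+2+a)^k)) := by
    unfold G
    rw [Finset.sum_range_succ' _ (j+1)]
    have h0 : (stirling1 (j+1) 0 : ℝ) = 0 := by norm_num [show stirling1 (j+1) 0 = 0 from rfl]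
    rw [h0]
    simp only [mul_zero, zero_div, add_zero]
    refine Finset.sum_congr rfl (fun ℓ _ => ?_)
    have hb : ((ℓ+1 : ℕ):ℝ) + 1 + a = (ℓ:ℝ) + 2 + a := by push_cast; ring
    rw [hb, sgs_rec j ℓ]
    ring
  rw [hL, Finset.sum_sub_distrib, ← Finset.mul_sum]
  have hS1 : ∑ ℓ ∈ range (j+1), (-1:ℝ)^(j-ℓ) * stirling1 j ℓ / ((ℓ:ℝ)+2+a)^k
      = G k (a+1) j := by
    unfold G
    refine Finset.sum_congr rfl (fun ℓ _ => ?_)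
    rw [show (ℓ:ℝ) + 1 + ((a+1:ℕ):ℝ) = (ℓ:ℝ)+2+a from by push_cast; ring]
  have hS2 : (j:ℝ) * ∑ ℓ ∈ range (j+1), (-1:ℝ)^(j-(ℓ+1)) * stirling1 j (ℓ+1) / ((ℓ:ℝ)+2+a)^k
      = j * G k a j := by
    rcases Nat.eq_zero_or_pos j with rfl | hj
    · norm_num
    · congr 1
      have h0 : (stirling1 j 0 : ℝ) = 0 := by
        obtain ⟨j', rfl⟩ : ∃ j', j = j' + 1 := ⟨j - 1, by omega⟩
        norm_num [show stirling1 (j'+1) 0 = 0 from rfl]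
      have e1 : ∑ ℓ ∈ range (j+1), (-1:ℝ)^(j-(ℓ+1)) * stirling1 j (ℓ+1) / ((ℓ:ℝ)+2+a)^k
          = ∑ ℓ ∈ range j, (-1:ℝ)^(j-(ℓ+1)) * stirling1 j (ℓ+1) / ((ℓ:ℝ)+2+a)^k := by
        rw [Finset.sum_range_succ, stirling1_eq_zero_of_lt j (j+1) (by omega)]
        norm_num
      have e2 : G k a j
          = ∑ ℓ ∈ range j, (-1:ℝ)^(j-(ℓ+1)) * stirling1 j (ℓ+1) / ((ℓ:ℝ)+2+a)^k := by
        unfold G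
        rw [Finset.sum_range_succ' _ j, h0]
        simp only [mul_zero, zero_div, add_zero, Nat.cast_zero]
        refine Finset.sum_congr rfl (fun ℓ _ => ?_)
        rw [show ((ℓ+1 : ℕ):ℝ) + 1 + a = (ℓ:ℝ)+2+a from by push_cast; ring]
      rw [e1, e2]
  rw [hS1, hS2]

/-- Main induction. -/
lemma key_induction (k : ℤ) (r : ℕ) (hr : 1 ≤ r) :
    ∀ n, r ≤ n → ∀ a : ℕ,
      ∑ j ∈ Finset.Icc r n, (rStirling2 r n j : ℝ) * G k a j = G k (a + (n - r)) r := by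
  intro n
  induction n with
  | zero => intro h; omega
  | succ n ih =>
    intro h a
    rcases Nat.lt_or_ge n r with hn | hn
    · have hnr : n + 1 = r := by omega
      subst hnr
      rw [Finset.Icc_self, Finset.sum_singleton, rStirling2_self _ hr]
      norm_num
    · have step : ∀ j ∈ Finset.Icc r (n+1), (rStirling2 r (n+1) j : ℝ) * G k a j
          = (j:ℝ) * (rStirling2 r n j : ℝ) * G k a j + (rStirling2 r n (j-1) : ℝ) * G k a j := by
        intro j hj
        simp only [Finset.mem_Icc] at hj
        obtain ⟨j', rfl⟩ : ∃ j', j = j' + 1 := ⟨j - 1, by omega⟩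
        rw [rStirling2_rec r n j' hn]
        push_cast
        ring
      rw [Finset.sum_congr rfl step, Finset.sum_add_distrib]
      have e1 : ∑ j ∈ Finset.Icc r (n+1), (j:ℝ) * (rStirling2 r n j : ℝ) * G k a j
          = ∑ j ∈ Finset.Icc r n, (j:ℝ) * (rStirling2 r n j : ℝ) * G k a j := by
        rw [Finset.sum_Icc_succ_top (by omega : r ≤ n + 1),
          rStirling2_eq_zero_of_gt r n (n+1) (by omega)]
        norm_num
      have e2 : ∑ j ∈ Finset.Icc r (n+1), (rStirling2 r n (j-1) : ℝ) * G k a j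
          = ∑ j ∈ Finset.Icc r n, (rStirling2 r n j : ℝ) * G k a (j+1) := by
        have hmap : Finset.Icc r (n+1) = (Finset.Icc (r-1) n).image (· + 1) := by
          ext x
          simp only [Finset.mem_Icc, Finset.mem_image]
          constructor
          · intro hx; exact ⟨x - 1, by omega, by omega⟩
          · rintro ⟨y, hy, rfl⟩; omega
        rw [hmap, Finset.sum_image (by intro x _ y _ hxy; simp only at hxy; omega)]
        have hins : Finset.Icc (r-1) n = insert (r-1) (Finset.Icc r n) := by
          ext x
          simp only [Finset.mem_Icc, Finset.mem_insert]
          omega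
        rw [hins, Finset.sum_insert (by simp only [Finset.mem_Icc]; omega)]
        rw [show r - 1 + 1 - 1 = r - 1 from by omega,
          rStirling2_eq_zero_of_lt r n (r-1) (by omega)]
        simp only [Nat.cast_zero, zero_mul, zero_add]
        refine Finset.sum_congr rfl (fun j hj => ?_)
        simp only [Finset.mem_Icc] at hj
        rw [show j + 1 - 1 = j from by omega]
      rw [e1, e2]
      have e3 : ∑ j ∈ Finset.Icc r n, (j:ℝ) * (rStirling2 r n j : ℝ) * G k a j
            + ∑ j ∈ Finset.Icc r n, (rStirling2 r n j : ℝ) * G k a (j+1)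
          = ∑ j ∈ Finset.Icc r n, (rStirling2 r n j : ℝ) * G k (a+1) j := by
        rw [← Finset.sum_add_distrib]
        refine Finset.sum_congr rfl (fun j _ => ?_)
        rw [G_succ]
        ring
      rw [e3, ih hn (a+1)]
      congr 1
      omega

theorem stmt0 (n r : ℕ) (k : ℤ) (hr : 1 ≤ r) (hn : r ≤ n) :
    ∑ j ∈ Finset.Icc r n, (rStirling2 r n j : ℝ) * polyCauchy k j =
      ∑ ℓ ∈ Finset.Icc 1 r, (-1 : ℝ) ^ (r - ℓ) / ((n + ℓ - r + 1 : ℕ) : ℝ) ^ k *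
        (stirling1 r ℓ : ℝ) := by
  have := key_induction k r hr n hn 0
  simp only [polyCauchy_eq_G]
  rw [this, zero_add]
  -- G k (n-r) r = ∑_{ℓ∈range (r+1)} ... ; RHS over Icc 1 r
  unfold G
  rw [Finset.sum_range_succ' _ r]
  have h0 : (stirling1 r 0 : ℝ) = 0 := by
    obtain ⟨r', rfl⟩ : ∃ r', r = r' + 1 := ⟨r - 1, by omega⟩
    norm_num [show stirling1 (r'+1) 0 = 0 from rfl]
  rw [h0]
  simp only [mul_zero, zero_div, add_zero, Nat.cast_zero]
  have hmap : Finset.Icc 1 r = (Finset.range r).image (· + 1) := by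
    ext x
    simp only [Finset.mem_Icc, Finset.mem_image, Finset.mem_range]
    constructor
    · intro hx; exact ⟨x - 1, by omega, by omega⟩
    · rintro ⟨y, hy, rfl⟩; omega
  rw [hmap, Finset.sum_image (by intro x _ y _ hxy; simp only at hxy; omega)]
  refine Finset.sum_congr rfl (fun ℓ hℓ => ?_)
  simp only [Finset.mem_range] at hℓ
  rw [show (n + (ℓ+1) - r + 1 : ℕ) = (ℓ + 1) + 1 + (n - r) from by omega]
  push_cast
  ring
end

section
/- For integers n ≥ 2 and k, the 2-Stirling transform of poly-Cauchy numbers satisfies ∑_{j=2}^{n} S_2(n,j) · c_j^{(k)} = -1/n^k + 1/(n+1)^k. -/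
open Finset

lemma stirling1_zero (n : ℕ) (hn : 1 ≤ n) : stirling1 n 0 = 0 := by
  obtain ⟨m, rfl⟩ : ∃ m', n = m' + 1 := ⟨n - 1, by omega⟩
  rfl

lemma stirling1_eq_zero {n m : ℕ} (h : n < m) : stirling1 n m = 0 := by
  induction n generalizing m with
  | zero => obtain ⟨m', rfl⟩ : ∃ m', m = m' + 1 := ⟨m - 1, by omega⟩; rfl
  | succ n ih =>
    obtain ⟨m', rfl⟩ := Nat.exists_eq_add_of_lt h
    simp only [stirling1]
    rw [ih (by omega), ih (by omega)]
    simp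

lemma rS2_eq_zero {n m : ℕ} (h : n < m) : rStirling2 2 n m = 0 := by
  induction n generalizing m with
  | zero => simp [rStirling2]
  | succ n ih =>
    rw [rStirling2.eq_def]
    rcases Nat.lt_or_ge (n+1) 2 with h2 | h2
    · simp [h2]
    · have : ¬ (n + 1 < 2) := by omega
      rcases eq_or_lt_of_le h2 with h3 | h3
      · simp [this, ← h3]; omega
      · have h4 : ¬ (n + 1 = 2) := by omega
        simp only [this, h4, if_false, if_neg]
        obtain ⟨m', rfl⟩ : ∃ m', m = m' + 1 := ⟨m - 1, by omega⟩
        rw [show (match m' + 1 with | 0 => 0 | m' + 1 => rStirling2 2 n m') = rStirling2 2 n m' from rfl]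
        rw [ih (by omega), ih (by omega)]
        simp

lemma rS2_zero (n : ℕ) : rStirling2 2 n 0 = 0 := by
  cases n with
  | zero => simp [rStirling2]
  | succ n =>
    rw [rStirling2.eq_def]
    rcases Nat.lt_or_ge (n+1) 2 with h2 | h2
    · simp [h2]
    · rcases eq_or_lt_of_le h2 with h3 | h3
      · simp [← h3]
      · simp [show ¬ (n+1 < 2) by omega, show ¬ (n+1 = 2) by omega]

lemma rS2_one (n : ℕ) : rStirling2 2 n 1 = 0 := by
  induction n with
  | zero => simp [rStirling2]
  | succ n ih =>
    rw [rStirling2.eq_def]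
    rcases Nat.lt_or_ge (n+1) 2 with h2 | h2
    · simp [h2]
    · rcases eq_or_lt_of_le h2 with h3 | h3
      · simp [← h3]
      · simp [show ¬ (n+1 < 2) by omega, show ¬ (n+1 = 2) by omega, ih, rS2_zero]

lemma rS2_rec {n : ℕ} (hn : 2 ≤ n) (m : ℕ) :
    rStirling2 2 (n + 1) (m + 1) = (m + 1) * rStirling2 2 n (m + 1) + rStirling2 2 n m := by
  rw [rStirling2.eq_def]
  simp [show ¬ (n+1 < 2) by omega, show ¬ (n+1 = 2) by omega]

noncomputable def F (k : ℤ) (x j : ℕ) : ℝ :=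
  ∑ ℓ ∈ range (j+1), (-1:ℝ)^(j-ℓ) * stirling1 j ℓ / ((ℓ + x : ℕ):ℝ)^k

lemma FA (k : ℤ) (x j : ℕ) (hj : 1 ≤ j) :
    F k x (j+1) = F k (x+1) j - (j:ℝ) * F k x j := by
  have e1 : F k x (j+1) = ∑ ℓ ∈ range (j+1),
      ((-1:ℝ)^(j-ℓ) * stirling1 j ℓ / ((ℓ + (x+1) : ℕ):ℝ)^k
        + (-1:ℝ)^(j-ℓ) * ((j : ℝ) * stirling1 j (ℓ+1)) / (((ℓ+1) + x : ℕ):ℝ)^k) := by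
    rw [F, Finset.sum_range_succ']
    have h0 : ((-1:ℝ))^(j+1-0) * ((stirling1 (j+1) 0 : ℕ) : ℝ) / ((0 + x : ℕ):ℝ)^k = 0 := by
      rw [stirling1_zero (j+1) (by omega)]; simp
    rw [h0, add_zero]
    apply Finset.sum_congr rfl
    intro ℓ _
    have h1 : stirling1 (j+1) (ℓ+1) = j * stirling1 j (ℓ+1) + stirling1 j ℓ := rfl
    have h2 : j + 1 - (ℓ + 1) = j - ℓ := by omega
    have h3 : (ℓ + (x+1) : ℕ) = ((ℓ+1) + x : ℕ) := by omega
    rw [h1, h2, h3]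
    push_cast
    ring
  rw [e1, Finset.sum_add_distrib]
  have e2 : ∑ ℓ ∈ range (j+1), (-1:ℝ)^(j-ℓ) * (stirling1 j ℓ : ℝ) / ((ℓ + (x+1) : ℕ):ℝ)^k
      = F k (x+1) j := rfl
  rw [e2]
  have e3 : ∑ ℓ ∈ range (j+1), (-1:ℝ)^(j-ℓ) * ((j:ℝ) * stirling1 j (ℓ+1)) / (((ℓ+1) + x : ℕ):ℝ)^k
      = -((j:ℝ) * F k x j) := by
    rw [Finset.sum_range_succ, stirling1_eq_zero (show j < j+1 by omega)]
    rw [F, Finset.sum_range_succ', stirling1_zero j hj]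
    push_cast
    simp only [mul_zero, zero_div, add_zero, zero_mul]
    rw [Finset.mul_sum, ← Finset.sum_neg_distrib]
    apply Finset.sum_congr rfl
    intro ℓ hℓ
    have hℓ' : ℓ < j := Finset.mem_range.mp hℓ
    have h4 : j - ℓ = (j - (ℓ+1)) + 1 := by omega
    rw [h4, pow_succ]
    ring
  rw [e3]
  ring

lemma aux (k : ℤ) : ∀ n, 2 ≤ n → ∀ x : ℕ,
    ∑ j ∈ range (n+2), (rStirling2 2 n j : ℝ) * F k x j
      = -1 / ((n - 1 + x : ℕ):ℝ)^k + 1 / ((n + x : ℕ):ℝ)^k := by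
  intro n hn
  induction n, hn using Nat.le_induction with
  | base =>
    intro x
    have hF : F k x 2 = -1 / ((1 + x : ℕ):ℝ)^k + 1 / ((2 + x : ℕ):ℝ)^k := by
      rw [F]
      rw [Finset.sum_range_succ, Finset.sum_range_succ,
        Finset.sum_range_succ, Finset.sum_range_zero]
      rw [show stirling1 2 0 = 0 from rfl, show stirling1 2 1 = 1 from rfl,
        show stirling1 2 2 = 1 from rfl]
      push_cast
      ring
    rw [show (2 + 2 : ℕ) = 3 + 1 by norm_num]
    rw [Finset.sum_range_succ, Finset.sum_range_succ,
      Finset.sum_range_succ, Finset.sum_range_succ, Finset.sum_range_zero]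
    rw [rS2_zero, rS2_one, rS2_eq_zero (show 2 < 3 by omega),
      show rStirling2 2 2 2 = 1 from rfl, hF]
    push_cast
    ring
  | succ n hn ih =>
    intro x
    rw [Finset.sum_range_succ']
    rw [rS2_zero]
    simp only [Nat.cast_zero, zero_mul, add_zero]
    have e1 : ∀ j ∈ range (n+2), (rStirling2 2 (n+1) (j+1) : ℝ) * F k x (j+1)
        = ((j:ℝ)+1) * (rStirling2 2 n (j+1) : ℝ) * F k x (j+1)
          + (rStirling2 2 n j : ℝ) * F k x (j+1) := by
      intro j _
      rw [rS2_rec hn j]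
      push_cast
      ring
    rw [Finset.sum_congr rfl e1, Finset.sum_add_distrib]
    have e2 : ∑ j ∈ range (n+2), ((j:ℝ)+1) * (rStirling2 2 n (j+1) : ℝ) * F k x (j+1)
        = ∑ j ∈ range (n+2), (j:ℝ) * (rStirling2 2 n j : ℝ) * F k x j := by
      have : ∑ j ∈ range (n+3), (j:ℝ) * (rStirling2 2 n j : ℝ) * F k x j
          = ∑ j ∈ range (n+2), ((j:ℝ)+1) * (rStirling2 2 n (j+1) : ℝ) * F k x (j+1) := by
        rw [Finset.sum_range_succ']
        push_cast
        simp
      rw [← this, Finset.sum_range_succ, rS2_eq_zero (show n < n+2 by omega)]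
      simp
    have e3 : ∑ j ∈ range (n+2), (rStirling2 2 n j : ℝ) * F k x (j+1)
        = ∑ j ∈ range (n+2), ((rStirling2 2 n j : ℝ) * F k (x+1) j
            - (j:ℝ) * (rStirling2 2 n j : ℝ) * F k x j) := by
      apply Finset.sum_congr rfl
      intro j _
      rcases Nat.eq_zero_or_pos j with rfl | hj
      · rw [rS2_zero]; simp
      · rw [FA k x j hj]; ring
    rw [e2, e3, Finset.sum_sub_distrib]
    have e4 := ih (x+1)
    rw [Finset.sum_sub_distrib] at *
    have : ∑ j ∈ range (n+2), (rStirling2 2 n j : ℝ) * F k (x+1) j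
        = -1 / ((n - 1 + (x+1) : ℕ):ℝ)^k + 1 / ((n + (x+1) : ℕ):ℝ)^k := e4
    rw [show ((n:ℕ) - 1 + (x+1)) = (n + 1 - 1 + x) by omega,
      show ((n:ℕ) + (x+1)) = (n + 1 + x) by omega] at this
    rw [this]
    ring

theorem stmt1 (n : ℕ) (k : ℤ) (hn : 2 ≤ n) :
    ∑ j ∈ Finset.Icc 2 n, (rStirling2 2 n j : ℝ) * polyCauchy k j =
      -1 / (n : ℝ) ^ k + 1 / ((n : ℝ) + 1) ^ k := by
  have h1 : ∀ j, polyCauchy k j = F k 1 j := by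
    intro j
    rw [polyCauchy, F]
    apply Finset.sum_congr rfl
    intro ℓ _
    push_cast
    ring_nf
  have h2 : ∑ j ∈ Finset.Icc 2 n, (rStirling2 2 n j : ℝ) * F k 1 j
      = ∑ j ∈ range (n+2), (rStirling2 2 n j : ℝ) * F k 1 j := by
    apply Finset.sum_subset
    · intro j hj
      simp only [Finset.mem_Icc] at hj
      exact Finset.mem_range.mpr (by omega)
    · intro j hj hj'
      simp only [Finset.mem_Icc, not_and, not_le] at hj'
      rcases Nat.lt_or_ge j 2 with h | h
      · interval_cases j
        · rw [rS2_zero]; simp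
        · rw [rS2_one]; simp
      · rw [rS2_eq_zero (by omega : n < j)]; simp
  rw [show (∑ j ∈ Finset.Icc 2 n, (rStirling2 2 n j : ℝ) * polyCauchy k j)
      = ∑ j ∈ Finset.Icc 2 n, (rStirling2 2 n j : ℝ) * F k 1 j from
    Finset.sum_congr rfl (fun j _ => by rw [h1])]
  rw [h2, aux k n hn 1]
  rw [show (n - 1 + 1 : ℕ) = n by omega]
  push_cast
  ring_nf
end

section
/- For integers n, r, k with n ≥ r-1 ≥ 0, ∑_{j=r-1}^{n} S_r(n+1, j+1) · c_j^{(k)} = ∑_{ℓ=1}^{r} (-1)^{r-ℓ} s(r,ℓ) · ∑_{i=0}^{n-r+ℓ} C(n-r+ℓ, i) / (i+1)^k. -/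
open Finset

lemma stirling1_gt : ∀ n m, n < m → stirling1 n m = 0 := by
  intro n
  induction n with
  | zero => intro m h; match m, h with | m+1, _ => rfl
  | succ n ih =>
    intro m h
    match m, h with
    | m+1, h =>
      show n * stirling1 n (m+1) + stirling1 n m = 0
      rw [ih (m+1) (by omega), ih m (by omega)]; simp

lemma rStirling2_gt (r : ℕ) : ∀ m j, m < j → rStirling2 r m j = 0 := by
  intro m
  induction m with
  | zero => intro j h; simp [rStirling2]; omega
  | succ m ih =>
    intro j h
    match j, h with
    | j+1, h =>
      show rStirling2 r (m+1) (j+1) = 0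
      by_cases h1 : m + 1 < r
      · simp [rStirling2, h1]
      · by_cases h2 : m + 1 = r
        · simp [rStirling2, h1, h2]; omega
        · show (if m + 1 < r then 0
            else if m + 1 = r then (if j+1 = r then 1 else 0)
            else (j+1) * rStirling2 r m (j+1) + rStirling2 r m j) = 0
          rw [if_neg h1, if_neg h2, ih (j+1) (by omega), ih j (by omega)]; simp

lemma rStirling2_lt (r : ℕ) : ∀ m j, j < r → rStirling2 r m j = 0 := by
  intro m
  induction m with
  | zero => intro j h; simp [rStirling2]; omega
  | succ m ih =>
    intro j h
    by_cases h1 : m + 1 < r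
    · match j with
      | 0 => simp [rStirling2, h1]
      | j+1 => simp [rStirling2, h1]
    · by_cases h2 : m + 1 = r
      · match j with
        | 0 => simp [rStirling2, h1, h2]; omega
        | j+1 => simp [rStirling2, h1, h2]; omega
      · match j with
        | 0 =>
          show (if m + 1 < r then 0
            else if m + 1 = r then (if 0 = r then 1 else 0)
            else 0 * rStirling2 r m 0 + 0) = 0
          rw [if_neg h1, if_neg h2]; simp
        | j+1 =>
          show (if m + 1 < r then 0
            else if m + 1 = r then (if j+1 = r then 1 else 0)
            else (j+1) * rStirling2 r m (j+1) + rStirling2 r m j) = 0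
          rw [if_neg h1, if_neg h2, ih (j+1) (by omega), ih j (by omega)]; simp

lemma rStirling2_diag (s : ℕ) : rStirling2 (s+1) (s+1) (s+1) = 1 := by
  match s with
  | 0 => simp [rStirling2]
  | s+1 =>
    show (if s + 2 < s+2 then 0
      else if s+2 = s+2 then (if s+2 = s+2 then 1 else 0)
      else _) = 1
    simp

lemma rStirling2_rec_s3 (s m j : ℕ) (h1 : ¬ (m + 1 < s + 1)) (h2 : m + 1 ≠ s + 1) :
    rStirling2 (s+1) (m+1) (j+1)
      = (j+1) * rStirling2 (s+1) m (j+1) + rStirling2 (s+1) m j := by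
  show (if m + 1 < s+1 then 0
    else if m + 1 = s+1 then (if j+1 = s+1 then 1 else 0)
    else (j+1) * rStirling2 (s+1) m (j+1) + rStirling2 (s+1) m j) = _
  rw [if_neg h1, if_neg h2]

noncomputable def Gc (a : ℕ → ℝ) (m : ℕ) : ℝ := ∑ i ∈ range (m+1), (m.choose i : ℝ) * a i

noncomputable def Tc (a : ℕ → ℝ) (j : ℕ) : ℝ :=
  ∑ ℓ ∈ range (j+1), (-1:ℝ)^j * (-1)^ℓ * stirling1 j ℓ * a ℓ

noncomputable def Rc (a : ℕ → ℝ) (r d : ℕ) : ℝ :=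
  ∑ ℓ ∈ range r, (-1:ℝ)^(r+ℓ+1) * stirling1 r (ℓ+1) * Gc a (d+ℓ)

lemma Gc_succ (a : ℕ → ℝ) (m : ℕ) :
    Gc a (m+1) = Gc a m + Gc (fun i => a (i+1)) m := by
  unfold Gc
  rw [sum_range_succ' (fun i => ((m+1).choose i : ℝ) * a i)]
  have h1 : ∀ i, (((m+1).choose (i+1) : ℕ) : ℝ) = (m.choose (i+1) : ℝ) + (m.choose i : ℝ) := by
    intro i; rw [Nat.choose_succ_succ']; push_cast; ring
  rw [Finset.sum_congr rfl (fun i _ => by rw [h1 i])]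
  have : ∑ i ∈ range (m+1), ((m.choose (i+1) : ℝ) + (m.choose i : ℝ)) * a (i+1)
      = (∑ i ∈ range (m+1), (m.choose (i+1) : ℝ) * a (i+1))
        + ∑ i ∈ range (m+1), (m.choose i : ℝ) * a (i+1) := by
    rw [← Finset.sum_add_distrib]; apply Finset.sum_congr rfl; intro i _; ring
  rw [this]
  have h2 : (∑ i ∈ range (m+1), (m.choose (i+1) : ℝ) * a (i+1)) + ((m+1).choose 0 : ℝ) * a 0
      = ∑ i ∈ range (m+1), (m.choose i : ℝ) * a i := by
    rw [sum_range_succ (fun i => (m.choose (i+1) : ℝ) * a (i+1)), Nat.choose_succ_self,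
        sum_range_succ' (fun i => (m.choose i : ℝ) * a i) m]
    simp
  push_cast at h2 ⊢
  linarith

lemma Tc_succ (a : ℕ → ℝ) (j : ℕ) :
    Tc a (j+1) = -(j:ℝ) * Tc a j + Tc (fun i => a (i+1)) j := by
  have hsplit : Tc a (j+1)
      = (∑ ℓ ∈ range (j+1), (j:ℝ) * ((-1:ℝ)^(j+1) * (-1)^(ℓ+1) * stirling1 j (ℓ+1) * a (ℓ+1)))
        + ∑ ℓ ∈ range (j+1), (-1:ℝ)^(j+1) * (-1)^(ℓ+1) * stirling1 j ℓ * a (ℓ+1) := by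
    unfold Tc
    rw [sum_range_succ' (fun ℓ => (-1:ℝ)^(j+1) * (-1)^ℓ * (stirling1 (j+1) ℓ : ℝ) * a ℓ)]
    rw [show stirling1 (j+1) 0 = 0 from rfl, ← sum_add_distrib]
    simp only [Nat.cast_zero, mul_zero, zero_mul, add_zero]
    apply sum_congr rfl
    intro ℓ _
    rw [show stirling1 (j+1) (ℓ+1) = j * stirling1 j (ℓ+1) + stirling1 j ℓ from rfl]
    push_cast; ring
  rw [hsplit]
  have h1 : ∑ ℓ ∈ range (j+1), (j:ℝ) * ((-1:ℝ)^(j+1) * (-1)^(ℓ+1) * stirling1 j (ℓ+1) * a (ℓ+1))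
      = -(j:ℝ) * Tc a j := by
    rw [sum_range_succ, stirling1_gt j (j+1) (by omega)]
    simp only [Nat.cast_zero, mul_zero, zero_mul, add_zero]
    unfold Tc
    rw [sum_range_succ' (fun ℓ => (-1:ℝ)^j * (-1)^ℓ * (stirling1 j ℓ : ℝ) * a ℓ), mul_add]
    have hj0 : -(j:ℝ) * ((-1:ℝ)^j * (-1)^0 * (stirling1 j 0 : ℝ) * a 0) = 0 := by
      match j with
      | 0 => simp
      | j+1 => rw [show stirling1 (j+1) 0 = 0 from rfl]; push_cast; ring
    rw [hj0, add_zero, Finset.mul_sum]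
    apply sum_congr rfl
    intro ℓ _
    rw [pow_succ]; ring
  rw [h1]
  congr 1
  unfold Tc
  apply sum_congr rfl
  intro ℓ _
  rw [pow_succ, pow_succ (-1:ℝ) ℓ]; ring

lemma neg_one_pow_congr_mod2 {m n : ℕ} (h : m % 2 = n % 2) : (-1:ℝ)^m = (-1:ℝ)^n := by
  conv_lhs => rw [← Nat.div_add_mod m 2]
  conv_rhs => rw [← Nat.div_add_mod n 2]
  rw [pow_add, pow_add, pow_mul, pow_mul, h]
  norm_num

lemma neg_one_pow_anti {m n : ℕ} (h : m % 2 ≠ n % 2) : (-1:ℝ)^m = -(-1:ℝ)^n := by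
  have : (-1:ℝ)^m = (-1:ℝ)^(n+1) := neg_one_pow_congr_mod2 (by omega)
  rw [this, pow_succ]; ring

lemma Rc_succ_d (a : ℕ → ℝ) (r d : ℕ) :
    Rc a r (d+1) = Rc a r d + Rc (fun i => a (i+1)) r d := by
  unfold Rc
  rw [← sum_add_distrib]
  apply sum_congr rfl
  intro ℓ _
  rw [show d+1+ℓ = (d+ℓ)+1 by omega, Gc_succ]
  ring

lemma Rc_rec (a : ℕ → ℝ) (r : ℕ) :
    Rc a (r+2) 0 = -(r:ℝ) * Rc a (r+1) 0 + Rc (fun i => a (i+1)) (r+1) 0 := by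
  have hsplit : Rc a (r+2) 0
      = (∑ ℓ ∈ range (r+2), (r+1:ℝ) * ((-1:ℝ)^(r+ℓ+3) * stirling1 (r+1) (ℓ+1) * Gc a ℓ))
        + ∑ ℓ ∈ range (r+2), (-1:ℝ)^(r+ℓ+3) * stirling1 (r+1) ℓ * Gc a ℓ := by
    unfold Rc
    rw [← sum_add_distrib]
    apply sum_congr rfl
    intro ℓ _
    rw [show stirling1 (r+2) (ℓ+1) = (r+1) * stirling1 (r+1) (ℓ+1) + stirling1 (r+1) ℓ from rfl]
    rw [show (-1:ℝ)^(r+2+ℓ+1) = (-1:ℝ)^(r+ℓ+3) from neg_one_pow_congr_mod2 (by omega)]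
    rw [show (0:ℕ)+ℓ = ℓ from by omega]
    push_cast; ring
  rw [hsplit]
  have h1 : ∑ ℓ ∈ range (r+2), (r+1:ℝ) * ((-1:ℝ)^(r+ℓ+3) * stirling1 (r+1) (ℓ+1) * Gc a ℓ)
      = -(r+1:ℝ) * Rc a (r+1) 0 := by
    rw [sum_range_succ, stirling1_gt (r+1) (r+2) (by omega)]
    simp only [Nat.cast_zero, mul_zero, zero_mul, add_zero]
    unfold Rc
    rw [neg_mul, ← Finset.mul_sum, Finset.mul_sum, ← neg_mul, Finset.mul_sum]
    apply sum_congr rfl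
    intro ℓ _
    rw [show (-1:ℝ)^(r+ℓ+3) = -(-1:ℝ)^(r+1+ℓ+1) from neg_one_pow_anti (by omega)]
    rw [show (0:ℕ)+ℓ = ℓ from by omega]
    ring
  have h2 : ∑ ℓ ∈ range (r+2), (-1:ℝ)^(r+ℓ+3) * stirling1 (r+1) ℓ * Gc a ℓ
      = Rc a (r+1) 0 + Rc (fun i => a (i+1)) (r+1) 0 := by
    rw [sum_range_succ' (fun ℓ => (-1:ℝ)^(r+ℓ+3) * (stirling1 (r+1) ℓ : ℝ) * Gc a ℓ)]
    rw [show stirling1 (r+1) 0 = 0 from rfl]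
    simp only [Nat.cast_zero, mul_zero, zero_mul, add_zero]
    unfold Rc
    rw [← sum_add_distrib]
    apply sum_congr rfl
    intro ℓ _
    rw [show (-1:ℝ)^(r+(ℓ+1)+3) = (-1:ℝ)^(r+1+ℓ+1) from neg_one_pow_congr_mod2 (by omega)]
    rw [show (0:ℕ)+ℓ = ℓ from by omega, Gc_succ]
    ring
  rw [h1, h2]
  ring

lemma Rc_eq_Tc (r : ℕ) : ∀ a : ℕ → ℝ, Rc a (r+1) 0 = Tc a r := by
  induction r with
  | zero =>
    intro a
    norm_num [Rc, Tc, Gc, stirling1]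
  | succ r ih =>
    intro a
    rw [Rc_rec, ih a, ih (fun i => a (i+1)), Tc_succ]

lemma main_ind (s d : ℕ) : ∀ a : ℕ → ℝ,
    ∑ t ∈ range (d+1), (rStirling2 (s+1) (s+1+d) (s+t+1) : ℝ) * Tc a (s+t)
      = Rc a (s+1) d := by
  induction d with
  | zero =>
    intro a
    rw [sum_range_one, show s+1+0 = s+1 by omega, show s+0 = s by omega,
        rStirling2_diag s, Rc_eq_Tc]
    norm_num
  | succ d ih =>
    intro a
    have step : ∀ t, (rStirling2 (s+1) (s+1+(d+1)) (s+t+1) : ℝ)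
        = ((s+t+1 : ℕ) : ℝ) * rStirling2 (s+1) (s+d+1) (s+t+1)
          + rStirling2 (s+1) (s+d+1) (s+t) := by
      intro t
      rw [show s+1+(d+1) = (s+d+1)+1 by omega,
          rStirling2_rec_s3 s (s+d+1) (s+t) (by omega) (by omega)]
      push_cast; ring
    calc ∑ t ∈ range (d+1+1), (rStirling2 (s+1) (s+1+(d+1)) (s+t+1) : ℝ) * Tc a (s+t)
        = (∑ t ∈ range (d+2), ((s+t+1 : ℕ) : ℝ)
              * rStirling2 (s+1) (s+d+1) (s+t+1) * Tc a (s+t))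
          + ∑ t ∈ range (d+2), (rStirling2 (s+1) (s+d+1) (s+t) : ℝ) * Tc a (s+t) := by
          rw [← sum_add_distrib]
          exact sum_congr rfl fun t _ => by rw [step t]; ring
      _ = (∑ t ∈ range (d+1), ((s+t+1 : ℕ) : ℝ)
              * rStirling2 (s+1) (s+d+1) (s+t+1) * Tc a (s+t))
          + ∑ t ∈ range (d+1), (rStirling2 (s+1) (s+d+1) (s+t+1) : ℝ)
              * (-((s+t : ℕ) : ℝ) * Tc a (s+t) + Tc (fun i => a (i+1)) (s+t)) := by
          congr 1
          · rw [sum_range_succ, rStirling2_gt (s+1) (s+d+1) (s+(d+1)+1) (by omega)]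
            norm_num
          · rw [sum_range_succ' (fun t => (rStirling2 (s+1) (s+d+1) (s+t) : ℝ) * Tc a (s+t))]
            rw [rStirling2_lt (s+1) (s+d+1) (s+0) (by omega)]
            norm_num
            refine sum_congr rfl fun t _ => ?_
            rw [show s+(t+1) = (s+t)+1 by omega, Tc_succ]
            push_cast; ring
      _ = (∑ t ∈ range (d+1), (rStirling2 (s+1) (s+1+d) (s+t+1) : ℝ) * Tc a (s+t))
          + ∑ t ∈ range (d+1), (rStirling2 (s+1) (s+1+d) (s+t+1) : ℝ)
              * Tc (fun i => a (i+1)) (s+t) := by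
          rw [← sum_add_distrib, ← sum_add_distrib]
          exact sum_congr rfl fun t _ => by
            rw [show s+1+d = s+d+1 by omega]
            push_cast; ring
      _ = Rc a (s+1) d + Rc (fun i => a (i+1)) (s+1) d := by
          rw [ih a, ih (fun i => a (i+1))]
      _ = Rc a (s+1) (d+1) := (Rc_succ_d a (s+1) d).symm

lemma polyCauchy_eq_Tc (k : ℤ) (j : ℕ) :
    polyCauchy k j = Tc (fun i => 1 / ((i:ℝ)+1)^k) j := by
  unfold polyCauchy Tc
  apply sum_congr rfl
  intro ℓ hℓ
  rw [mem_range] at hℓ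
  rw [show (-1:ℝ)^(j-ℓ) = (-1:ℝ)^(j+ℓ) from neg_one_pow_congr_mod2 (by omega), pow_add]
  simp only [div_eq_mul_inv, one_mul]

theorem stmt3 (n r : ℕ) (k : ℤ) (hr : 1 ≤ r) (hn : r - 1 ≤ n) :
    ∑ j ∈ Finset.Icc (r - 1) n, (rStirling2 r (n + 1) (j + 1) : ℝ) * polyCauchy k j =
      ∑ ℓ ∈ Finset.Icc 1 r, (-1 : ℝ) ^ (r - ℓ) * (stirling1 r ℓ : ℝ) *
        ∑ i ∈ Finset.range (n + ℓ - r + 1),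
          ((n + ℓ - r).choose i : ℝ) / ((i : ℝ) + 1) ^ k := by
  obtain ⟨s, rfl⟩ : ∃ s, r = s + 1 := ⟨r - 1, by omega⟩
  obtain ⟨d, rfl⟩ : ∃ d, n = s + d := ⟨n - s, by omega⟩
  set a : ℕ → ℝ := fun i => 1 / ((i:ℝ)+1)^k with ha
  have hL : ∑ j ∈ Finset.Icc (s+1-1) (s+d), (rStirling2 (s+1) (s+d+1) (j+1) : ℝ) * polyCauchy k j
      = Rc a (s+1) d := by
    rw [show s+1-1 = s by omega, ← Finset.Ico_add_one_right_eq_Icc, Finset.sum_Ico_eq_sum_range,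
        show s+d+1-s = d+1 by omega, ← main_ind s d a]
    refine sum_congr rfl fun t _ => ?_
    rw [polyCauchy_eq_Tc, show s+1+d = s+d+1 by omega]
  rw [hL, ← Finset.Ico_add_one_right_eq_Icc, Finset.sum_Ico_eq_sum_range, show s+1+1-1 = s+1 by omega]
  unfold Rc
  refine sum_congr rfl fun i hi => ?_
  rw [mem_range] at hi
  rw [show (1:ℕ)+i = i+1 by omega,
      show s+d+(i+1)-(s+1) = d+i by omega,
      show (-1:ℝ)^(s+1-(i+1)) = (-1)^(s+1+i+1) from neg_one_pow_congr_mod2 (by omega)]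
  congr 1
  unfold Gc
  refine sum_congr rfl fun i' _ => ?_
  rw [ha]
  simp only [div_eq_mul_inv, one_mul]
end

section
/- For integers n ≥ 0 and k, ∑_{j=0}^{n} S(n+1, j+1) · c_j^{(k)} = ∑_{i=0}^{n} C(n,i) / (i+1)^k, where S denotes the Stirling numbers of the second kind. -/
open Finset

lemma stirling1_eq_zero_s4 : ∀ n ℓ, n < ℓ → stirling1 n ℓ = 0
  | 0, ℓ+1, _ => rfl
  | n+1, ℓ+1, h => by
    show n * stirling1 n (ℓ+1) + stirling1 n ℓ = 0
    rw [stirling1_eq_zero_s4 n (ℓ+1) (by omega), stirling1_eq_zero_s4 n ℓ (by omega)]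
    simp

lemma stirling2_eq_zero : ∀ n ℓ, n < ℓ → stirling2 n ℓ = 0
  | 0, ℓ+1, _ => rfl
  | n+1, ℓ+1, h => by
    show (ℓ+1) * stirling2 n (ℓ+1) + stirling2 n ℓ = 0
    rw [stirling2_eq_zero n (ℓ+1) (by omega), stirling2_eq_zero n ℓ (by omega)]
    simp

lemma key (n : ℕ) : ∀ ℓ, ∑ j ∈ range (n+1), (-1:ℝ)^j * (stirling2 (n+1) (j+1)) * (stirling1 j ℓ)
    = (-1:ℝ)^ℓ * (n.choose ℓ) := by
  induction n with
  | zero =>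
    intro ℓ
    cases ℓ with
    | zero => simp [stirling2, stirling1]
    | succ ℓ => simp [stirling2, stirling1]
  | succ n ih =>
    intro ℓ
    have expand : ∀ j : ℕ, (stirling2 (n+2) (j+1) : ℝ)
        = ((j:ℝ)+1) * stirling2 (n+1) (j+1) + stirling2 (n+1) j := by
      intro j
      show (((j+1) * stirling2 (n+1) (j+1) + stirling2 (n+1) j : ℕ) : ℝ) = _
      push_cast; ring
    have hsplit : ∑ j ∈ range (n+2), (-1:ℝ)^j * (stirling2 (n+2) (j+1)) * (stirling1 j ℓ)
        = (∑ j ∈ range (n+2), (-1:ℝ)^j * (((j:ℝ)+1) * stirling2 (n+1) (j+1)) * stirling1 j ℓ)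
          + ∑ j ∈ range (n+2), (-1:ℝ)^j * (stirling2 (n+1) j : ℝ) * stirling1 j ℓ := by
      rw [← Finset.sum_add_distrib]
      refine Finset.sum_congr rfl fun j _ => ?_
      rw [expand j]; ring
    have hA : (∑ j ∈ range (n+2), (-1:ℝ)^j * (((j:ℝ)+1) * stirling2 (n+1) (j+1)) * stirling1 j ℓ)
        = ∑ j ∈ range (n+1), (-1:ℝ)^j * (((j:ℝ)+1) * stirling2 (n+1) (j+1)) * stirling1 j ℓ := by
      rw [Finset.sum_range_succ, stirling2_eq_zero (n+1) (n+2) (by omega)]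
      simp
    have hB : (∑ j ∈ range (n+2), (-1:ℝ)^j * (stirling2 (n+1) j : ℝ) * stirling1 j ℓ)
        = ∑ j ∈ range (n+1), (-1:ℝ)^(j+1) * (stirling2 (n+1) (j+1) : ℝ) * stirling1 (j+1) ℓ := by
      rw [Finset.sum_range_succ']
      simp [stirling2]
    rw [hsplit, hA, hB, ← Finset.sum_add_distrib]
    have hsq : (-1:ℝ)^ℓ * (-1:ℝ)^ℓ = 1 := by
      rw [← mul_pow]; norm_num
    cases ℓ with
    | zero =>
      have hterm : ∀ j ∈ range (n+1),
          (-1:ℝ)^j * (((j:ℝ)+1) * stirling2 (n+1) (j+1)) * stirling1 j 0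
            + (-1:ℝ)^(j+1) * (stirling2 (n+1) (j+1) : ℝ) * stirling1 (j+1) 0
          = (-1:ℝ)^j * (stirling2 (n+1) (j+1)) * (stirling1 j 0) := by
        intro j _
        cases j with
        | zero => simp [stirling1]
        | succ j => simp [stirling1, stirling1_eq_zero_s4]
      rw [Finset.sum_congr rfl hterm, ih 0]
      simp
    | succ ℓ =>
      have hterm : ∀ j ∈ range (n+1),
          (-1:ℝ)^j * (((j:ℝ)+1) * stirling2 (n+1) (j+1)) * stirling1 j (ℓ+1)
            + (-1:ℝ)^(j+1) * (stirling2 (n+1) (j+1) : ℝ) * stirling1 (j+1) (ℓ+1)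
          = (-1:ℝ)^j * (stirling2 (n+1) (j+1)) * (stirling1 j (ℓ+1))
            + (-1:ℝ)^(ℓ+1) * ((-1:ℝ)^ℓ * ((-1:ℝ)^j * (stirling2 (n+1) (j+1)) * (stirling1 j ℓ))) := by
        intro j _
        have hrec : (stirling1 (j+1) (ℓ+1) : ℝ) = (j:ℝ) * stirling1 j (ℓ+1) + stirling1 j ℓ := by
          show ((j * stirling1 j (ℓ+1) + stirling1 j ℓ : ℕ) : ℝ) = _
          push_cast; ring
        rw [hrec]
        linear_combination ((-1:ℝ)^j * (stirling2 (n+1) (j+1) : ℝ) * (stirling1 j ℓ : ℝ)) * hsq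
      rw [Finset.sum_congr rfl hterm, Finset.sum_add_distrib, ih (ℓ+1), ← Finset.mul_sum,
        ← Finset.mul_sum, ih ℓ]
      have hch : (n+1).choose (ℓ+1) = n.choose ℓ + n.choose (ℓ+1) := Nat.choose_succ_succ' n ℓ
      rw [hch]
      have h2 : (-1:ℝ)^ℓ * (-1:ℝ)^ℓ = 1 := by rw [← mul_pow]; norm_num
      push_cast
      linear_combination ((-1:ℝ)^(ℓ+1) * (n.choose ℓ : ℝ)) * h2

lemma key2 (n ℓ : ℕ) : ∑ j ∈ range (n+1),
    (stirling2 (n+1) (j+1) : ℝ) * ((-1:ℝ)^(j-ℓ) * stirling1 j ℓ) = (n.choose ℓ : ℝ) := by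
  have hterm : ∀ j ∈ range (n+1), (stirling2 (n+1) (j+1) : ℝ) * ((-1:ℝ)^(j-ℓ) * stirling1 j ℓ)
      = (-1:ℝ)^ℓ * ((-1:ℝ)^j * (stirling2 (n+1) (j+1)) * (stirling1 j ℓ)) := by
    intro j _
    rcases le_or_gt ℓ j with h | h
    · have e : (-1:ℝ)^(j-ℓ) = (-1:ℝ)^(j+ℓ) := by
        conv_rhs => rw [show j + ℓ = (j - ℓ) + 2*ℓ from by omega]
        rw [pow_add, pow_mul]
        norm_num
      rw [e, pow_add]
      ring
    · rw [stirling1_eq_zero_s4 j ℓ h]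
      simp
  rw [Finset.sum_congr rfl hterm, ← Finset.mul_sum, key n ℓ, ← mul_assoc, ← mul_pow]
  norm_num

theorem stmt4 (n : ℕ) (k : ℤ) :
    ∑ j ∈ Finset.range (n + 1), (stirling2 (n + 1) (j + 1) : ℝ) * polyCauchy k j =
      ∑ i ∈ Finset.range (n + 1), (n.choose i : ℝ) / ((i : ℝ) + 1) ^ k := by
  have step1 : ∀ j ∈ Finset.range (n+1), (stirling2 (n+1) (j+1) : ℝ) * polyCauchy k j
      = ∑ ℓ ∈ range (n+1),
        (stirling2 (n+1) (j+1) : ℝ) * ((-1:ℝ)^(j-ℓ) * stirling1 j ℓ / ((ℓ:ℝ)+1)^k) := by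
    intro j hj
    rw [polyCauchy, Finset.mul_sum]
    apply Finset.sum_subset
    · intro x hx
      simp only [Finset.mem_range] at hx hj ⊢
      omega
    · intro x hx hnx
      simp only [Finset.mem_range] at hx hnx
      rw [stirling1_eq_zero_s4 j x (by omega)]
      simp
  rw [Finset.sum_congr rfl step1, Finset.sum_comm]
  refine Finset.sum_congr rfl fun ℓ _ => ?_
  have e : ∀ j ∈ range (n+1), (stirling2 (n+1) (j+1) : ℝ) * ((-1:ℝ)^(j-ℓ) * stirling1 j ℓ / ((ℓ:ℝ)+1)^k)
      = (stirling2 (n+1) (j+1) : ℝ) * ((-1:ℝ)^(j-ℓ) * stirling1 j ℓ) / ((ℓ:ℝ)+1)^k := by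
    intro j _; ring
  rw [Finset.sum_congr rfl e, ← Finset.sum_div, key2 n ℓ]
end

section
/- Let 1 ≤ r ≤ n and 1 ≤ m ≤ n-r+1. Then ∑_{ℓ=1}^{m} s(r,ℓ) · s_r(n, r-ℓ+m) = s(n,m), where s(n,m) denotes the unsigned Stirling numbers of the first kind and s_r(n,j) the unsigned r-Stirling numbers of the first kind. -/
open Finset

lemma stirling1_zero_of_lt : ∀ n k, n < k → stirling1 n k = 0 := by
  intro n
  induction n with
  | zero => intro k hk; cases k with
    | zero => omega
    | succ k => simp [stirling1]
  | succ n ih =>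
    intro k hk
    cases k with
    | zero => omega
    | succ k =>
      simp only [stirling1]
      rw [ih (k+1) (by omega), ih k (by omega)]
      simp

lemma rStirling1_zero_of_lt (r : ℕ) : ∀ n j, j < r → rStirling1 r n j = 0 := by
  intro n
  induction n with
  | zero => intro j hj; simp [rStirling1]; omega
  | succ n ih =>
    intro j hj
    simp only [rStirling1]
    split
    · rfl
    · split
      · simp; omega
      · rw [ih j hj]
        cases j with
        | zero => simp
        | succ j' => simp [ih j' (by omega)]

lemma rStirling1_self (r m : ℕ) : rStirling1 r r m = if m = r then 1 else 0 := by
  cases r with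
  | zero => simp [rStirling1]
  | succ s => simp [rStirling1]

lemma rStirling1_succ (r n j : ℕ) (h : r ≤ n) :
    rStirling1 r (n + 1) (j + 1) = n * rStirling1 r n (j + 1) + rStirling1 r n j := by
  simp only [rStirling1]
  rw [if_neg (by omega), if_neg (by omega)]

lemma key_lemma (r : ℕ) (hr : 1 ≤ r) : ∀ n, r ≤ n → ∀ m,
    ∑ ℓ ∈ Finset.Icc 1 m, stirling1 r ℓ * rStirling1 r n (r - ℓ + m) = stirling1 n m := by
  intro n hn
  induction n, hn using Nat.le_induction with
  | base =>
    intro m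
    cases m with
    | zero =>
      simp
      cases r with
      | zero => omega
      | succ s => simp [stirling1]
    | succ m' =>
      rw [Finset.sum_eq_single (m' + 1)]
      · rw [rStirling1_self]
        by_cases hmr : m' + 1 ≤ r
        · rw [if_pos (by omega)]; ring
        · rw [if_neg (by omega), stirling1_zero_of_lt r (m'+1) (by omega)]
      · intro ℓ hℓ hne
        simp only [Finset.mem_Icc] at hℓ
        by_cases hlr : ℓ ≤ r
        · rw [rStirling1_self, if_neg (by omega)]; ring
        · rw [stirling1_zero_of_lt r ℓ (by omega)]; ring
      · intro h
        exact absurd (Finset.mem_Icc.mpr (by omega)) h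
  | succ n hn ih =>
    intro m
    cases m with
    | zero =>
      simp [stirling1]
    | succ m' =>
      have step : ∀ ℓ ∈ Finset.Icc 1 (m' + 1),
          stirling1 r ℓ * rStirling1 r (n + 1) (r - ℓ + (m' + 1)) =
          n * (stirling1 r ℓ * rStirling1 r n (r - ℓ + (m' + 1)))
            + stirling1 r ℓ * rStirling1 r n (r - ℓ + m') := by
        intro ℓ hℓ
        have : r - ℓ + (m' + 1) = (r - ℓ + m') + 1 := by omega
        rw [this, rStirling1_succ r n _ hn]
        ring
      rw [Finset.sum_congr rfl step, Finset.sum_add_distrib, ← Finset.mul_sum, ih (m' + 1)]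
      have : ∑ ℓ ∈ Finset.Icc 1 (m' + 1), stirling1 r ℓ * rStirling1 r n (r - ℓ + m')
          = stirling1 n m' := by
        rw [Finset.sum_Icc_succ_top (by omega)]
        have hlast : stirling1 r (m' + 1) * rStirling1 r n (r - (m' + 1) + m') = 0 := by
          by_cases hmr : m' + 1 ≤ r
          · rw [rStirling1_zero_of_lt r n _ (by omega)]; ring
          · rw [stirling1_zero_of_lt r (m'+1) (by omega)]; ring
        rw [hlast, add_zero, ih m']
      rw [this]
      simp [stirling1]

theorem stmt8 (n r m : ℕ) (hr : 1 ≤ r) (hn : r ≤ n) (hm : 1 ≤ m)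
    (hm' : m ≤ n - r + 1) :
    ∑ ℓ ∈ Finset.Icc 1 m, stirling1 r ℓ * rStirling1 r n (r - ℓ + m) =
      stirling1 n m := key_lemma r hr n hn m
end

section
/- For integers n ≥ r ≥ 0, ∑_{k} s_r(n,k) z^k = z^r (z+r)(z+r+1)⋯(z+n-1) as polynomials in z, where s_r denotes the unsigned r-Stirling numbers of the first kind. -/
open Finset

lemma rS_gt (r : ℕ) : ∀ n k, n < k → rStirling1 r n k = 0 := by
  intro n
  induction n with
  | zero =>
    intro k hk
    have : ¬ (r = 0 ∧ k = 0) := by omega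
    simp [rStirling1, this]
  | succ n ih =>
    intro k hk
    simp only [rStirling1]
    split
    · rfl
    · split
      · rename_i h1 h2
        have : k ≠ r := by omega
        simp [this]
      · match k, hk with
        | k' + 1, hk =>
          rw [ih (k'+1) (by omega)]
          simp [ih k' (by omega)]

theorem stmt12 (n r : ℕ) (hn : r ≤ n) (z : ℝ) :
    ∑ k ∈ Finset.range (n + 1), (rStirling1 r n k : ℝ) * z ^ k =
      z ^ r * ∏ i ∈ Finset.Ico r n, (z + (i : ℝ)) := by
  induction n, hn using Nat.le_induction with
  | base =>
    rw [Finset.Ico_self, Finset.prod_empty, mul_one]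
    match r with
    | 0 => simp [rStirling1]
    | r' + 1 =>
      rw [Finset.sum_range_succ]
      have h0 : ∀ k, k ∈ Finset.range (r' + 1) → (rStirling1 (r'+1) (r'+1) k : ℝ) * z ^ k = 0 := by
        intro k hk
        simp only [Finset.mem_range] at hk
        have : k ≠ r' + 1 := by omega
        simp [rStirling1, this]
      rw [Finset.sum_congr rfl h0]
      simp [rStirling1]
  | succ n hrn ih =>
    have hrec : ∀ k, rStirling1 r (n+1) k =
        n * rStirling1 r n k + (match k with | 0 => 0 | m' + 1 => rStirling1 r n m') := by
      intro k
      have h1 : ¬ (n + 1 < r) := by omega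
      have h2 : n + 1 ≠ r := by omega
      simp only [rStirling1, h1, h2, if_false]
    have key : ∑ k ∈ Finset.range (n + 2), (rStirling1 r (n+1) k : ℝ) * z ^ k
        = (z + n) * ∑ k ∈ Finset.range (n + 1), (rStirling1 r n k : ℝ) * z ^ k := by
      have expand : ∀ k, (rStirling1 r (n+1) k : ℝ) * z ^ k =
          n * ((rStirling1 r n k : ℝ) * z ^ k) +
          ((match k with | 0 => (0:ℕ) | m' + 1 => rStirling1 r n m') : ℝ) * z ^ k := by
        intro k
        rw [hrec k]
        cases k <;> push_cast <;> ring
      rw [Finset.sum_congr rfl (fun k _ => expand k), Finset.sum_add_distrib,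
        ← Finset.mul_sum]
      have e1 : ∑ k ∈ Finset.range (n + 2), (rStirling1 r n k : ℝ) * z ^ k
          = ∑ k ∈ Finset.range (n + 1), (rStirling1 r n k : ℝ) * z ^ k := by
        rw [Finset.sum_range_succ, rS_gt r n (n+1) (by omega)]
        simp
      have e2 : ∑ k ∈ Finset.range (n + 2),
          ((match k with | 0 => (0:ℕ) | m' + 1 => rStirling1 r n m') : ℝ) * z ^ k
          = z * ∑ k ∈ Finset.range (n + 1), (rStirling1 r n k : ℝ) * z ^ k := by
        rw [Finset.sum_range_succ' _ (n+1)]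
        simp only [Nat.cast_zero, pow_zero]
        rw [Finset.mul_sum]
        simp only [Nat.cast_zero, zero_mul, add_zero]
        refine Finset.sum_congr rfl fun k _ => ?_
        ring
      rw [e1, e2]
      ring
    rw [key, ih, Finset.prod_Ico_succ_top hrn]
    ring
end
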